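/- Let T be a complete first-order theory. If some formula φ(x̄, ȳ) witnesses SOP_n for T, then some (possibly different) formula ψ(x̄, ȳ) witnesses SOP_{≤ n} for T, i.e. the no-cycle condition holds simultaneously for every cycle length m with 2 ≤ m ≤ n. -/

import Mathlib

open FirstOrder FirstOrder.Language

universe u v

/-- The formula `φ(x̄, ȳ)` (with `lg x̄ = lg ȳ = d`) witnesses `SOP_n` for `T`. -/
def WitnessesSOP {L : FirstOrder.Language.{u, v}} (T : L.Theory) (n d : ℕ)
    (φ : L.Formula (Fin d ⊕ Fin d)) : Prop :=
  ∃ (M : Theory.ModelType.{u, v, max u v} T) (a : ℕ → Fin d → M),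
    (∀ k m : ℕ, k < m → Formula.Realize φ (Sum.elim (a k) (a m))) ∧
    ¬ ∃ x : Fin n → Fin d → M,
      ∀ ℓ k : Fin n, (k : ℕ) = ((ℓ : ℕ) + 1) % n →
        Formula.Realize φ (Sum.elim (x ℓ) (x k))

/-- The formula `ψ` witnesses `SOP_{≤n}` for `T`: as `SOP_n`, but with no `ψ`-cycle of any
length `m` with `2 ≤ m ≤ n`. -/
def WitnessesSOPLe {L : FirstOrder.Language.{u, v}} (T : L.Theory) (n d : ℕ)
    (ψ : L.Formula (Fin d ⊕ Fin d)) : Prop :=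
  ∃ (M : Theory.ModelType.{u, v, max u v} T) (a : ℕ → Fin d → M),
    (∀ k m : ℕ, k < m → Formula.Realize ψ (Sum.elim (a k) (a m))) ∧
    ∀ m : ℕ, 2 ≤ m → m ≤ n →
      ¬ ∃ x : Fin m → Fin d → M,
        ∀ ℓ k : Fin m, (k : ℕ) = ((ℓ : ℕ) + 1) % m →
          Formula.Realize ψ (Sum.elim (x ℓ) (x k))

section Aux

variable {L : FirstOrder.Language.{u, v}} {d : ℕ}

/-- Conjunction over a finset. -/
noncomputable def finIInf {α β : Type*} (s : Finset β) (f : β → L.Formula α) : L.Formula α :=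
  BoundedFormula.iInf (fun b : s => f b)

/-- Variable assignment for the `i`-th vertex of a path with `j` intermediate vertices:
vertex `0` is `ȳ` (the `Sum.inr` variables), vertex `j+1` is `x̄` (the `Sum.inl` variables),
and vertices `1, …, j` are the existentially quantified tuples. -/
def pathVtx (j : ℕ) (i : ℕ) (k : Fin d) :
    (Fin d ⊕ Fin d) ⊕ (Fin j × Fin d) :=
  if h0 : i = 0 then Sum.inl (Sum.inr k)
  else if h : i < j + 1 then Sum.inr (⟨i - 1, by omega⟩, k)
  else Sum.inl (Sum.inl k)

/-- The formula asserting that there is a `φ`-path of length `j+1` from `ȳ` to `x̄`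
(with `j` intermediate tuples). -/
noncomputable def pathF (φ : L.Formula (Fin d ⊕ Fin d)) (j : ℕ) :
    L.Formula (Fin d ⊕ Fin d) :=
  Formula.iExs (Fin j × Fin d)
    (finIInf Finset.univ (fun i : Fin (j + 1) =>
      φ.relabel (Sum.elim (fun k => pathVtx j (i : ℕ) k) (fun k => pathVtx j ((i : ℕ) + 1) k))))

lemma realize_iInf' {α β : Type*} {M : Type (max u v)} [L.Structure M] (s : Finset β)
    (f : β → L.Formula α) (v : α → M) :
    Formula.Realize (finIInf s f) v ↔ ∀ b ∈ s, Formula.Realize (f b) v :=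
  by
    unfold finIInf Formula.Realize
    rw [BoundedFormula.realize_iInf]
    simp

lemma realize_pathF {M : Type (max u v)} [L.Structure M] (φ : L.Formula (Fin d ⊕ Fin d))
    (j : ℕ) (v : Fin d ⊕ Fin d → M) :
    (pathF φ j).Realize v ↔
      ∃ P : ℕ → Fin d → M, (P 0 = fun k => v (Sum.inr k)) ∧
        (P (j + 1) = fun k => v (Sum.inl k)) ∧
        ∀ i ≤ j, Formula.Realize φ (Sum.elim (P i) (P (i + 1))) := by
  rw [pathF, Formula.realize_iExs]
  constructor
  · rintro ⟨z, hz⟩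
    rw [realize_iInf'] at hz
    refine ⟨fun i k => Sum.elim v z (pathVtx j (min i (j + 1)) k), ?_, ?_, ?_⟩
    · funext k
      show Sum.elim v z (pathVtx j (min 0 (j + 1)) k) = v (Sum.inr k)
      rw [show min 0 (j + 1) = 0 from by omega]
      simp [pathVtx]
    · funext k
      show Sum.elim v z (pathVtx j (min (j + 1) (j + 1)) k) = v (Sum.inl k)
      rw [show min (j + 1) (j + 1) = j + 1 from by omega]
      rw [pathVtx, dif_neg (by omega), dif_neg (by omega)]
      rfl
    · intro i hi
      show Formula.Realize φ (Sum.elim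
        (fun k => Sum.elim v z (pathVtx j (min i (j + 1)) k))
        (fun k => Sum.elim v z (pathVtx j (min (i + 1) (j + 1)) k)))
      rw [Nat.min_eq_left (by omega), Nat.min_eq_left (by omega)]
      have h := hz ⟨i, by omega⟩ (Finset.mem_univ _)
      rw [Formula.realize_relabel, Sum.comp_elim] at h
      exact h
  · rintro ⟨P, h0, h1, hedge⟩
    refine ⟨fun p => P ((p.1 : ℕ) + 1) p.2, ?_⟩
    rw [realize_iInf']
    intro b _
    rw [Formula.realize_relabel, Sum.comp_elim]
    have key : ∀ i' : ℕ, i' ≤ j + 1 →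
        (Sum.elim v (fun p : Fin j × Fin d => P ((p.1 : ℕ) + 1) p.2) ∘
          fun k => pathVtx j i' k) = P i' := by
      intro i' hi'
      funext k
      simp only [Function.comp_apply, pathVtx]
      split_ifs with hc1 hc2
      · subst hc1
        rw [h0]
        rfl
      · have h3 : i' - 1 + 1 = i' := by omega
        conv_rhs => rw [← h3]
        rfl
      · have h3 : i' = j + 1 := by omega
        subst h3
        rw [h1]
        rfl
    rw [key (b : ℕ) (by omega), key ((b : ℕ) + 1) (by omega)]
    exact hedge (b : ℕ) (by omega)

end Aux

/-- from Claim 2.6, `SOP_n ⇔ SOP_{≤n}`: for a complete theory `T`, if some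
formula witnesses `SOP_n`, then some (possibly different) formula witnesses `SOP_{≤n}`. -/
theorem stmt_14 {L : FirstOrder.Language.{u, v}} (T : L.Theory) (hT : T.IsComplete) (n : ℕ)
    (h : ∃ (d : ℕ) (φ : L.Formula (Fin d ⊕ Fin d)), WitnessesSOP T n d φ) :
    ∃ (d : ℕ) (ψ : L.Formula (Fin d ⊕ Fin d)), WitnessesSOPLe T n d ψ := by
  obtain ⟨d, φ, M, a, hchain, hnocyc⟩ := h
  rcases lt_or_ge n 2 with hn | hn
  · exact ⟨d, φ, M, a, hchain, fun m h2 hmn => absurd (h2.trans hmn) (by omega)⟩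
  refine ⟨d, φ ⊓ finIInf (Finset.range (n - 2)) (fun j => ∼(pathF φ j)),
    M, fun k => a (n * k), ?_, ?_⟩
  · -- the chain
    intro p q hpq
    have hmul : n * p + n ≤ n * q := by
      calc n * p + n = n * (p + 1) := by ring
        _ ≤ n * q := Nat.mul_le_mul (le_refl n) (by omega)
    rw [Formula.realize_inf]
    refine ⟨hchain _ _ (by omega), ?_⟩
    rw [realize_iInf']
    intro j hj
    rw [Finset.mem_range] at hj
    rw [Formula.realize_not, realize_pathF]
    rintro ⟨P, h0, h1, hedge⟩
    have h0' : P 0 = a (n * q) := funext fun k => (congrFun h0 k).trans rfl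
    have h1' : P (j + 1) = a (n * p) := funext fun k => (congrFun h1 k).trans rfl
    -- build an n-cycle
    set W : Fin n → Fin d → M := fun i =>
      if (i : ℕ) < n - j - 1 then a (n * p + (i : ℕ)) else P ((i : ℕ) - (n - j - 1)) with hW
    have hWlt : ∀ i : Fin n, (i : ℕ) < n - j - 1 → W i = a (n * p + (i : ℕ)) :=
      fun i hi => if_pos hi
    have hWge : ∀ i : Fin n, n - j - 1 ≤ (i : ℕ) → W i = P ((i : ℕ) - (n - j - 1)) :=
      fun i hi => if_neg (by omega)
    refine hnocyc ⟨W, ?_⟩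
    intro ℓ k' hk'
    rcases Nat.lt_or_ge ((ℓ : ℕ) + 1) n with hl | hl
    · rw [Nat.mod_eq_of_lt hl] at hk'
      rcases Nat.lt_or_ge ((ℓ : ℕ) + 1) (n - j - 1) with h1l | h1l
      · rw [hWlt ℓ (by omega), hWlt k' (by omega), hk']
        exact hchain _ _ (by omega)
      · rcases Nat.lt_or_ge (ℓ : ℕ) (n - j - 1) with h2l | h2l
        · rw [hWlt ℓ (by omega), hWge k' (by omega)]
          have e : (k' : ℕ) - (n - j - 1) = 0 := by omega
          rw [e, h0']
          exact hchain _ _ (by omega)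
        · rw [hWge ℓ h2l, hWge k' (by omega)]
          have e : (k' : ℕ) - (n - j - 1) = ((ℓ : ℕ) - (n - j - 1)) + 1 := by omega
          rw [e]
          exact hedge _ (by omega)
    · have hln : (ℓ : ℕ) + 1 = n := by omega
      have hk0 : (k' : ℕ) = 0 := by rw [hk', hln, Nat.mod_self]
      rw [hWge ℓ (by omega), hWlt k' (by omega)]
      have e : (ℓ : ℕ) - (n - j - 1) = j := by omega
      rw [e, hk0, Nat.add_zero, ← h1']
      exact hedge j le_rfl
  · -- no short cycles
    rintro m h2 hmn ⟨x, hx⟩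
    have hm0 : 0 < m := by omega
    have hXe : ∀ i : ℕ, Formula.Realize
        (φ ⊓ finIInf (Finset.range (n - 2)) (fun j => ∼(pathF φ j)))
        (Sum.elim (x ⟨i % m, Nat.mod_lt _ hm0⟩) (x ⟨(i + 1) % m, Nat.mod_lt _ hm0⟩)) :=
      fun i => hx _ _ (Nat.mod_add_mod i m 1).symm
    rcases eq_or_lt_of_le hmn with rfl | hlt
    · exact hnocyc ⟨x, fun ℓ kk hkk => (Formula.realize_inf.mp (hx ℓ kk hkk)).1⟩
    · obtain ⟨-, hnopath⟩ := Formula.realize_inf.mp (hXe 0)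
      rw [realize_iInf'] at hnopath
      have hnp := hnopath (m - 2) (Finset.mem_range.mpr (by omega))
      rw [Formula.realize_not, realize_pathF] at hnp
      apply hnp
      refine ⟨fun i => x ⟨(1 + i) % m, Nat.mod_lt _ hm0⟩, ?_, ?_, ?_⟩
      · funext k; simp
      · have hidx : (⟨(1 + (m - 2 + 1)) % m, Nat.mod_lt _ hm0⟩ : Fin m) =
            ⟨0 % m, Nat.mod_lt _ hm0⟩ :=
          Fin.ext (by
            show (1 + (m - 2 + 1)) % m = 0 % m
            rw [show 1 + (m - 2 + 1) = m from by omega, Nat.mod_self, Nat.zero_mod])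
        funext k
        beta_reduce
        rw [hidx]
        rfl
      · intro i hi
        have hE := (Formula.realize_inf.mp (hXe (1 + i))).1
        exact hE
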